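/- Let θ, z : (a,b) → ℝ be C¹ functions satisfying θ'(t) = √(1 - cos²θ(t)/z(t)²) > 0 and z'(t) = sin θ(t) on (a,b), with z > |cos θ|, and suppose θ(t) → 0 and z(t) → 1 as t → a⁺. Then sin²θ(t)/(z(t) - cos θ(t))^{3/2} → 4√2/3 as t → a⁺. -/

import Mathlib

open Set Filter Real

theorem sin_sq_div_rpow_tendsto (a b : ℝ) (θ z θ' : ℝ → ℝ)
    (hdom : ∀ t ∈ Set.Ioo a b, |Real.cos (θ t)| < z t)
    (hθ : ∀ t ∈ Set.Ioo a b, HasDerivAt θ (θ' t) t)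
    (hθ'eq : ∀ t ∈ Set.Ioo a b,
      θ' t = Real.sqrt (1 - (Real.cos (θ t)) ^ 2 / (z t) ^ 2))
    (hθ'pos : ∀ t ∈ Set.Ioo a b, 0 < θ' t)
    (hz' : ∀ t ∈ Set.Ioo a b, HasDerivAt z (Real.sin (θ t)) t)
    (hθlim : Filter.Tendsto θ (nhdsWithin a (Set.Ioo a b)) (nhds 0))
    (hzlim : Filter.Tendsto z (nhdsWithin a (Set.Ioo a b)) (nhds 1)) :
    Filter.Tendsto
      (fun t => (Real.sin (θ t)) ^ 2 / (z t - Real.cos (θ t)) ^ ((3 : ℝ) / 2))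
      (nhdsWithin a (Set.Ioo a b)) (nhds (4 * Real.sqrt 2 / 3)) := by
  rcases le_or_gt b a with hba | hab
  · rw [Set.Ioo_eq_empty (not_lt.mpr hba), nhdsWithin_empty]
    exact tendsto_bot
  rw [nhdsWithin_Ioo_eq_nhdsGT hab] at hθlim hzlim ⊢
  -- basic positivity facts on the interval
  have hzpos : ∀ t ∈ Set.Ioo a b, 0 < z t := fun t ht =>
    (abs_nonneg _).trans_lt (hdom t ht)
  have hwpos : ∀ t ∈ Set.Ioo a b, 0 < z t - Real.cos (θ t) := fun t ht =>
    sub_pos.mpr ((le_abs_self _).trans_lt (hdom t ht))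
  -- θ is strictly increasing, hence positive on the interval
  have hmono : StrictMonoOn θ (Set.Ioo a b) := by
    apply strictMonoOn_of_deriv_pos (convex_Ioo a b)
    · exact fun t ht => ((hθ t ht).continuousAt).continuousWithinAt
    · intro t ht
      rw [interior_Ioo] at ht
      rw [(hθ t ht).deriv]
      exact hθ'pos t ht
  have hθpos : ∀ t ∈ Set.Ioo a b, 0 < θ t := by
    intro t ht
    set s := (a + t) / 2 with hs
    have hsa : a < s := by simp only [hs]; linarith [ht.1]
    have hst : s < t := by simp only [hs]; linarith [ht.1]
    have hsI : s ∈ Set.Ioo a b := ⟨hsa, hst.trans ht.2⟩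
    have h0s : 0 ≤ θ s := by
      refine le_of_tendsto hθlim ?_
      filter_upwards [Ioo_mem_nhdsGT hsa]
        with u hu
      exact (hmono ⟨hu.1, hu.2.trans (hst.trans ht.2)⟩ hsI hu.2).le
    exact h0s.trans_lt (hmono hsI ht hst)
  -- shrink the interval so that θ < π/2 on it
  have hsmall : ∀ᶠ t in nhdsWithin a (Set.Ioi a), θ t < Real.pi / 2 := by
    have : (0 : ℝ) < Real.pi / 2 := by positivity
    exact hθlim.eventually (Filter.Tendsto.eventually_lt_const this tendsto_id)
  obtain ⟨c, hc, hsub⟩ := mem_nhdsGT_iff_exists_Ioo_subset.mp hsmall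
  set b' : ℝ := min c b with hb'
  have hab' : a < b' := lt_min hc.out hab
  have hsubI : Set.Ioo a b' ⊆ Set.Ioo a b := Set.Ioo_subset_Ioo le_rfl (min_le_right _ _)
  have hsmall' : ∀ t ∈ Set.Ioo a b', θ t < Real.pi / 2 := fun t ht =>
    hsub ⟨ht.1, ht.2.trans_le (min_le_left _ _)⟩
  have hsinpos : ∀ t ∈ Set.Ioo a b', 0 < Real.sin (θ t) := by
    intro t ht
    exact Real.sin_pos_of_pos_of_lt_pi (hθpos t (hsubI ht))
      ((hsmall' t ht).trans (by linarith [Real.pi_pos]))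
  -- derivatives of numerator and denominator
  set F' : ℝ → ℝ := fun t => 2 * Real.sin (θ t) * Real.cos (θ t) * θ' t with hF'def
  set G' : ℝ → ℝ := fun t =>
    3 / 2 * (z t - Real.cos (θ t)) ^ ((1 : ℝ) / 2)
      * (Real.sin (θ t) + Real.sin (θ t) * θ' t) with hG'def
  have hF : ∀ t ∈ Set.Ioo a b', HasDerivAt (fun u => Real.sin (θ u) ^ 2) (F' t) t := by
    intro t ht
    have h1 : HasDerivAt (fun u => Real.sin (θ u)) (Real.cos (θ t) * θ' t) t :=
      (Real.hasDerivAt_sin (θ t)).comp t (hθ t (hsubI ht))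
    have : HasDerivAt (fun u => Real.sin (θ u) ^ 2) _ t := h1.pow 2
    convert this using 1
    simp [hF'def]; ring
  have hG : ∀ t ∈ Set.Ioo a b',
      HasDerivAt (fun u => (z u - Real.cos (θ u)) ^ ((3 : ℝ) / 2)) (G' t) t := by
    intro t ht
    have hc' : HasDerivAt (fun u => Real.cos (θ u)) (-Real.sin (θ t) * θ' t) t :=
      (Real.hasDerivAt_cos (θ t)).comp t (hθ t (hsubI ht))
    have hw : HasDerivAt (fun u => z u - Real.cos (θ u))
        (Real.sin (θ t) + Real.sin (θ t) * θ' t) t := by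
      have : HasDerivAt (fun u => z u - Real.cos (θ u)) _ t := (hz' t (hsubI ht)).sub hc'
      convert this using 1
      ring
    have := hw.rpow_const (p := (3 : ℝ) / 2) (Or.inr (by norm_num))
    convert this using 1
    norm_num [hG'def]
    ring
  have hG'ne : ∀ t ∈ Set.Ioo a b', G' t ≠ 0 := by
    intro t ht
    have h1 := hwpos t (hsubI ht)
    have h2 := hsinpos t ht
    have h3 := hθ'pos t (hsubI ht)
    have h4 : (0 : ℝ) < (z t - Real.cos (θ t)) ^ ((1 : ℝ) / 2) :=
      Real.rpow_pos_of_pos h1 _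
    have : 0 < G' t := by
      simp only [hG'def]
      positivity
    exact this.ne'
  -- limits of numerator and denominator
  have hcoslim : Filter.Tendsto (fun t => Real.cos (θ t)) (nhdsWithin a (Set.Ioi a))
      (nhds 1) := by
    have := (Real.continuous_cos.tendsto 0).comp hθlim
    simpa [Function.comp_def] using this
  have hwlim : Filter.Tendsto (fun t => z t - Real.cos (θ t)) (nhdsWithin a (Set.Ioi a))
      (nhds 0) := by
    have := hzlim.sub hcoslim
    simpa using this
  have hfa : Filter.Tendsto (fun t => Real.sin (θ t) ^ 2) (nhdsWithin a (Set.Ioi a))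
      (nhds 0) := by
    have := ((Real.continuous_sin.tendsto 0).comp hθlim).pow 2
    simpa using this
  have hga : Filter.Tendsto (fun t => (z t - Real.cos (θ t)) ^ ((3 : ℝ) / 2))
      (nhdsWithin a (Set.Ioi a)) (nhds 0) := by
    have h := ((Real.continuousAt_rpow_const 0 ((3 : ℝ) / 2)
      (Or.inr (by norm_num))).tendsto).comp hwlim
    simpa [Function.comp_def, Real.zero_rpow (by norm_num : ((3 : ℝ) / 2) ≠ 0)] using h
  -- limit of θ'
  have hθ'lim : Filter.Tendsto θ' (nhdsWithin a (Set.Ioi a)) (nhds 0) := by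
    have hinner : Filter.Tendsto (fun t => 1 - Real.cos (θ t) ^ 2 / z t ^ 2)
        (nhdsWithin a (Set.Ioi a)) (nhds 0) := by
      have := ((hcoslim.pow 2).div (hzlim.pow 2) (by norm_num)).const_sub 1
      simpa using this
    have h := (Real.continuous_sqrt.tendsto 0).comp hinner
    simp only [Real.sqrt_zero] at h
    refine h.congr' ?_
    filter_upwards [Ioo_mem_nhdsGT hab]
      with t ht
    exact (hθ'eq t ht).symm
  -- the limit of F'/G'
  have hdiv : Filter.Tendsto (fun t => F' t / G' t) (nhdsWithin a (Set.Ioi a))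
      (nhds (4 * Real.sqrt 2 / 3)) := by
    have hH : Filter.Tendsto
        (fun t => 4 / 3 * Real.cos (θ t) * Real.sqrt (z t + Real.cos (θ t))
          / (z t * (1 + θ' t))) (nhdsWithin a (Set.Ioi a))
        (nhds (4 / 3 * 1 * Real.sqrt (1 + 1) / (1 * (1 + 0)))) := by
      refine Filter.Tendsto.div ?_ ?_ (by norm_num)
      · exact (hcoslim.const_mul _).mul
          ((Real.continuous_sqrt.tendsto _).comp (hzlim.add hcoslim))
      · exact hzlim.mul (hθ'lim.const_add 1)
    have hval : (4 / 3 * 1 * Real.sqrt (1 + 1) / (1 * (1 + 0)) : ℝ)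
        = 4 * Real.sqrt 2 / 3 := by
      norm_num
      ring
    rw [hval] at hH
    refine hH.congr' ?_
    filter_upwards [Ioo_mem_nhdsGT hab']
      with t ht
    -- pointwise algebraic identity
    have htI := hsubI ht
    have hw := hwpos t htI
    have hzp := hzpos t htI
    have hsp := hsinpos t ht
    have hθp := hθ'pos t htI
    have hczp : 0 < z t + Real.cos (θ t) := by
      linarith [hdom t htI, neg_abs_le (Real.cos (θ t))]
    -- key identity: θ' t * z t = √(z - cos θ) * √(z + cos θ)
    have hkey : θ' t * z t
        = Real.sqrt (z t - Real.cos (θ t)) * Real.sqrt (z t + Real.cos (θ t)) := by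
      rw [hθ'eq t htI]
      rw [← Real.sqrt_mul hw.le]
      rw [show (z t - Real.cos (θ t)) * (z t + Real.cos (θ t))
          = (1 - Real.cos (θ t) ^ 2 / z t ^ 2) * z t ^ 2 by
        field_simp; ring]
      have hlt : Real.cos (θ t) ^ 2 < z t ^ 2 := by
        nlinarith [hdom t htI, abs_nonneg (Real.cos (θ t)), sq_abs (Real.cos (θ t))]
      have hnn : (0:ℝ) ≤ 1 - Real.cos (θ t) ^ 2 / z t ^ 2 := by
        rw [sub_nonneg, div_le_one (by positivity)]
        exact hlt.le
      rw [Real.sqrt_mul hnn, Real.sqrt_sq hzp.le]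
    have hsw : Real.sqrt (z t - Real.cos (θ t)) > 0 := Real.sqrt_pos.mpr hw
    have hrw : (z t - Real.cos (θ t)) ^ ((1 : ℝ) / 2)
        = Real.sqrt (z t - Real.cos (θ t)) := (Real.sqrt_eq_rpow _).symm
    simp only [hF'def, hG'def, hrw]
    rw [div_eq_div_iff (by positivity) (by positivity)]
    linear_combination (-(2 * Real.sin (θ t) * Real.cos (θ t) * (1 + θ' t))) * hkey
  -- apply L'Hôpital on (a, b')
  have := HasDerivAt.lhopital_zero_right_on_Ioo hab' hF hG hG'ne hfa hga hdiv
  exact this
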